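/- The map Z(u¹,u²,u³,u⁴) = (cos u¹ cosh u³, sin u¹ cosh u³, u², sin u¹ sinh u³, -cos u¹ sinh u³, u⁴) into ℝ⁶ satisfies (x¹ + iy¹)² + (x² + iy²)² = 1 where x = (Z₁,Z₂,Z₃), y = (Z₄,Z₅,Z₆) (i.e. it lies on the complex cylinder), and the induced metric ⟨∂ᵢZ,∂ⱼZ⟩ with respect to the ℝ⁶ bilinear form of signature (+,+,+,-,-,-) equals (du¹)² + (du²)² - (du³)² - (du⁴)². -/

import Mathlib

open Real

/-- Parametrization of the complex cylinder `(Z¹)² + (Z²)² = 1` in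
`ℂ³ ≅ ℝ⁶` (`i`-splitting: `(x¹,x²,x³,y¹,y²,y³)`). -/
noncomputable def Zc (p : Fin 4 → ℝ) : Fin 6 → ℝ :=
  ![cos (p 0) * cosh (p 2), sin (p 0) * cosh (p 2), p 1,
    sin (p 0) * sinh (p 2), -(cos (p 0) * sinh (p 2)), p 3]

/-- The bilinear form of signature `(+,+,+,-,-,-)` on `ℝ⁶`. -/
def ip6 (a b : Fin 6 → ℝ) : ℝ :=
  a 0 * b 0 + a 1 * b 1 + a 2 * b 2 - a 3 * b 3 - a 4 * b 4 - a 5 * b 5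

/-- The tangent vector `∂ᵢZ`. -/
noncomputable def dZc (i : Fin 4) (p : Fin 4 → ℝ) : Fin 6 → ℝ :=
  fun k => fderiv ℝ (fun q => Zc q k) p (Pi.single i 1)

noncomputable abbrev pr4 (k : Fin 4) : (Fin 4 → ℝ) →L[ℝ] ℝ := ContinuousLinearMap.proj k

lemma fderiv_mul02 (f g : ℝ → ℝ) (f' g' : ℝ) (p : Fin 4 → ℝ)
    (hf : HasDerivAt f f' (p 0)) (hg : HasDerivAt g g' (p 2)) (i : Fin 4) :
    fderiv ℝ (fun q : Fin 4 → ℝ => f (q 0) * g (q 2)) p (Pi.single i 1)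
      = f' * g (p 2) * (Pi.single i 1 : Fin 4 → ℝ) 0
        + f (p 0) * g' * (Pi.single i 1 : Fin 4 → ℝ) 2 := by
  have h0 : HasFDerivAt (fun q : Fin 4 → ℝ => f (q 0)) (f' • pr4 0) p :=
    hf.comp_hasFDerivAt p (pr4 0).hasFDerivAt
  have h2 : HasFDerivAt (fun q : Fin 4 → ℝ => g (q 2)) (g' • pr4 2) p :=
    hg.comp_hasFDerivAt p (pr4 2).hasFDerivAt
  rw [HasFDerivAt.fderiv (show HasFDerivAt (fun q : Fin 4 → ℝ => f (q 0) * g (q 2)) _ p from h0.mul h2)]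
  simp [pr4]
  ring

lemma fderiv_coord (j : Fin 4) (p : Fin 4 → ℝ) (i : Fin 4) :
    fderiv ℝ (fun q : Fin 4 → ℝ => q j) p (Pi.single i 1)
      = (Pi.single i 1 : Fin 4 → ℝ) j := by
  have h : HasFDerivAt (fun q : Fin 4 → ℝ => q j) (pr4 j) p := (pr4 j).hasFDerivAt
  rw [h.fderiv]
  simp [pr4]

variable (i : Fin 4) (p : Fin 4 → ℝ)

lemma dZc0 : dZc i p 0 = -sin (p 0) * cosh (p 2) * (Pi.single i 1 : Fin 4 → ℝ) 0
    + cos (p 0) * sinh (p 2) * (Pi.single i 1 : Fin 4 → ℝ) 2 := by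
  show fderiv ℝ (fun q : Fin 4 → ℝ => cos (q 0) * cosh (q 2)) p (Pi.single i 1) = _
  rw [fderiv_mul02 _ _ _ _ p (Real.hasDerivAt_cos _) (Real.hasDerivAt_cosh _)]

lemma dZc1 : dZc i p 1 = cos (p 0) * cosh (p 2) * (Pi.single i 1 : Fin 4 → ℝ) 0
    + sin (p 0) * sinh (p 2) * (Pi.single i 1 : Fin 4 → ℝ) 2 := by
  show fderiv ℝ (fun q : Fin 4 → ℝ => sin (q 0) * cosh (q 2)) p (Pi.single i 1) = _
  rw [fderiv_mul02 _ _ _ _ p (Real.hasDerivAt_sin _) (Real.hasDerivAt_cosh _)]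

lemma dZc2 : dZc i p 2 = (Pi.single i 1 : Fin 4 → ℝ) 1 := by
  show fderiv ℝ (fun q : Fin 4 → ℝ => q 1) p (Pi.single i 1) = _
  rw [fderiv_coord 1]

lemma dZc3 : dZc i p 3 = cos (p 0) * sinh (p 2) * (Pi.single i 1 : Fin 4 → ℝ) 0
    + sin (p 0) * cosh (p 2) * (Pi.single i 1 : Fin 4 → ℝ) 2 := by
  show fderiv ℝ (fun q : Fin 4 → ℝ => sin (q 0) * sinh (q 2)) p (Pi.single i 1) = _
  rw [fderiv_mul02 _ _ _ _ p (Real.hasDerivAt_sin _) (Real.hasDerivAt_sinh _)]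

lemma dZc4 : dZc i p 4 = sin (p 0) * sinh (p 2) * (Pi.single i 1 : Fin 4 → ℝ) 0
    - cos (p 0) * cosh (p 2) * (Pi.single i 1 : Fin 4 → ℝ) 2 := by
  show fderiv ℝ (fun q : Fin 4 → ℝ => -(cos (q 0) * sinh (q 2))) p (Pi.single i 1) = _
  have he : (fun q : Fin 4 → ℝ => -(cos (q 0) * sinh (q 2)))
      = fun q : Fin 4 → ℝ => (fun x => -cos x) (q 0) * sinh (q 2) := by
    funext q; ring
  rw [he, fderiv_mul02 (fun x => -cos x) _ _ _ p ((Real.hasDerivAt_cos _).neg) (Real.hasDerivAt_sinh _)]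
  ring

lemma dZc5 : dZc i p 5 = (Pi.single i 1 : Fin 4 → ℝ) 3 := by
  show fderiv ℝ (fun q : Fin 4 → ℝ => q 3) p (Pi.single i 1) = _
  rw [fderiv_coord 3]

/-- The map `Z` lies on the complex cylinder: `(x¹+iy¹)² + (x²+iy²)² = 1`,
and the induced metric is `(du¹)² + (du²)² - (du³)² - (du⁴)²`. -/
theorem complex_cylinder_parametrization :
    ∀ p : Fin 4 → ℝ,
      ((Zc p 0 : ℂ) + Complex.I * Zc p 3) ^ 2
        + ((Zc p 1 : ℂ) + Complex.I * Zc p 4) ^ 2 = 1 ∧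
      ∀ i j : Fin 4,
        ip6 (dZc i p) (dZc j p) =
          Matrix.diagonal (![1, 1, -1, -1] : Fin 4 → ℝ) i j := by
  intro p
  constructor
  · have h1 : Complex.cos (p 0)^2 + Complex.sin (p 0)^2 = 1 := Complex.cos_sq_add_sin_sq _
    have h2 : Complex.cosh (p 2)^2 - Complex.sinh (p 2)^2 = 1 := Complex.cosh_sq_sub_sinh_sq _
    have hI : (Complex.I)^2 = -1 := Complex.I_sq
    simp only [Zc, Matrix.cons_val_zero, Matrix.cons_val_one, Matrix.head_cons,
      Matrix.cons_val_three, Matrix.cons_val_four, Matrix.tail_cons]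
    push_cast
    linear_combination ((Complex.cosh (p 2))^2 + Complex.I^2 * (Complex.sinh (p 2))^2) * h1
      + (Complex.sinh (p 2))^2 * hI + h2
  · intro i j
    have h1 : sin (p 0)^2 + cos (p 0)^2 = 1 := sin_sq_add_cos_sq (p 0)
    have h2 : cosh (p 2)^2 - sinh (p 2)^2 = 1 := cosh_sq_sub_sinh_sq (p 2)
    simp only [ip6, dZc0, dZc1, dZc2, dZc3, dZc4, dZc5]
    fin_cases i <;> fin_cases j <;>
      simp [Pi.single_apply, Matrix.diagonal] <;> nlinarith [h1, h2]
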